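/- Let Γ be the additive submonoid of ℕ generated by {4, 6, 11} (a numerical semigroup with conductor 14). Then there do not exist f, g ∈ ℂ[[t]] such that the ℂ-subalgebra R := ⟨f, g⟩ + t¹⁴·ℂ[[t]] satisfies Γ_R = Γ. In other words, no closed ℂ-subalgebra of ℂ[[t]] with semigroup Γ can be generated, together with the ideal t¹⁴·ℂ[[t]], by two elements. -/

import Mathlib

noncomputable section

/-- `f ∈ ℂ[[t]]` has order exactly `n`: the coefficient of `t^n` is nonzero and all
lower coefficients vanish. -/
def HasOrder (f : PowerSeries ℂ) (n : ℕ) : Prop :=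
  PowerSeries.coeff n f ≠ 0 ∧ ∀ m < n, PowerSeries.coeff m f = 0

/-- The semigroup of orders of (nonzero) elements of a set `S ⊆ ℂ[[t]]`. -/
def sgp (S : Set (PowerSeries ℂ)) : Set ℕ :=
  {n | ∃ f ∈ S, HasOrder f n}

/-- A `ℂ`-subalgebra `R ⊆ ℂ[[t]]` is closed if every `f` which is approximated to
arbitrary order by elements of `R` lies in `R`. -/
def IsClosedSubalg (R : Subalgebra ℂ (PowerSeries ℂ)) : Prop :=
  ∀ f : PowerSeries ℂ,
    (∀ N : ℕ, ∃ g ∈ R, ∀ m < N, PowerSeries.coeff m (f - g) = 0) → f ∈ R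

/-- The set `⟨x₀,…,x_{k-1}⟩ + t^c·ℂ[[t]] = {p(x₀,…,x_{k-1}) + h}`. -/
def adjSet {k : ℕ} (x : Fin k → PowerSeries ℂ) (c : ℕ) : Set (PowerSeries ℂ) :=
  {f | ∃ (p : MvPolynomial (Fin k) ℂ) (h : PowerSeries ℂ),
    f = MvPolynomial.aeval x p + (PowerSeries.X : PowerSeries ℂ) ^ c * h}

/-- `c` is the conductor of `Γ`: the least natural number such that all `n ≥ c` lie in `Γ`. -/
def IsConductor (Γ : AddSubmonoid ℕ) (c : ℕ) : Prop :=
  (∀ n, c ≤ n → n ∈ Γ) ∧ ∀ c' < c, ∃ n, c' ≤ n ∧ n ∉ Γ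

/-- `v 0 < v 1 < ⋯` minimally generates `Γ`. -/
def MinGen (Γ : AddSubmonoid ℕ) {k : ℕ} (v : Fin k → ℕ) : Prop :=
  StrictMono v ∧ AddSubmonoid.closure (Set.range v) = Γ ∧
    ∀ s : Set ℕ, s ⊂ Set.range v → AddSubmonoid.closure s ≠ Γ

/-- `(x 0, …, x (k-1))` is in normal form with respect to `Γ` (with generators `v`):
the coefficient of `t^(v i)` in `x i` is `1`, and every other nonzero coefficient occurs
at an exponent which is a gap of `Γ` greater than `v i`. -/
def NormalFormT (Γ : AddSubmonoid ℕ) {k : ℕ} (v : Fin k → ℕ)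
    (x : Fin k → PowerSeries ℂ) : Prop :=
  ∀ i, PowerSeries.coeff (v i) (x i) = 1 ∧
    ∀ m, m ≠ v i → PowerSeries.coeff m (x i) ≠ 0 → m ∉ Γ ∧ v i < m

namespace Stmt17Aux

open MvPolynomial

abbrev PS := PowerSeries ℂ

/-- 2-variable exponent vector. -/
def mk2 (a b : ℕ) : Fin 2 →₀ ℕ := Finsupp.single 0 a + Finsupp.single 1 b

@[simp] lemma mk2_apply0 (a b : ℕ) : mk2 a b 0 = a := by
  simp [mk2, Finsupp.single_apply]

@[simp] lemma mk2_apply1 (a b : ℕ) : mk2 a b 1 = b := by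
  simp [mk2, Finsupp.single_apply]

lemma eq_mk2 (d : Fin 2 →₀ ℕ) : d = mk2 (d 0) (d 1) := by
  ext i
  fin_cases i <;> simp [mk2, Finsupp.single_apply]

lemma mk2_injEq {a b c d : ℕ} : mk2 a b = mk2 c d ↔ a = c ∧ b = d := by
  constructor
  · intro h
    exact ⟨by simpa using congrArg (fun z => z 0) h,
           by simpa using congrArg (fun z => z 1) h⟩
  · rintro ⟨rfl, rfl⟩; rfl

lemma coeff_aeval_sum (x : Fin 2 → PS) (p : MvPolynomial (Fin 2) ℂ) (m : ℕ) :
    PowerSeries.coeff m (aeval x p) =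
      ∑ d ∈ p.support, p.coeff d * PowerSeries.coeff m (x 0 ^ d 0 * x 1 ^ d 1) := by
  conv_lhs => rw [p.as_sum, map_sum, map_sum]
  refine Finset.sum_congr rfl fun d hd => ?_
  rw [aeval_monomial]
  have hp : (Finsupp.prod d fun i k => x i ^ k) = x 0 ^ d 0 * x 1 ^ d 1 := by
    rw [Finsupp.prod_fintype _ _ (by simp)]
    simp [Fin.prod_univ_two]
  rw [hp, ← Algebra.smul_def, map_smul, smul_eq_mul]

lemma sum_restrict (x : Fin 2 → PS) (m : ℕ) (S : Finset (Fin 2 →₀ ℕ))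
    (hv : ∀ d : Fin 2 →₀ ℕ, d ∉ S → PowerSeries.coeff m (x 0 ^ d 0 * x 1 ^ d 1) = 0)
    (p : MvPolynomial (Fin 2) ℂ) :
    PowerSeries.coeff m (aeval x p) =
      ∑ d ∈ S, p.coeff d * PowerSeries.coeff m (x 0 ^ d 0 * x 1 ^ d 1) := by
  classical
  rw [coeff_aeval_sum]
  have h1 : ∑ d ∈ p.support, p.coeff d * PowerSeries.coeff m (x 0 ^ d 0 * x 1 ^ d 1)
      = ∑ d ∈ p.support ∪ S, p.coeff d * PowerSeries.coeff m (x 0 ^ d 0 * x 1 ^ d 1) :=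
    Finset.sum_subset Finset.subset_union_left
      (fun d _ hd => by rw [MvPolynomial.notMem_support_iff.mp hd, zero_mul])
  have h2 : ∑ d ∈ S, p.coeff d * PowerSeries.coeff m (x 0 ^ d 0 * x 1 ^ d 1)
      = ∑ d ∈ p.support ∪ S, p.coeff d * PowerSeries.coeff m (x 0 ^ d 0 * x 1 ^ d 1) :=
    Finset.sum_subset Finset.subset_union_right
      (fun d _ hd => by rw [hv d hd, mul_zero])
  rw [h1, ← h2]

lemma coeff_pow_mul_eq_zero {f g : PS} {a b : ℕ}
    (hf : (PowerSeries.X : PS) ^ a ∣ f) (hg : (PowerSeries.X : PS) ^ b ∣ g)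
    {i j m : ℕ} (hm : m < a * i + b * j) :
    PowerSeries.coeff m (f ^ i * g ^ j) = 0 := by
  have h1 : (PowerSeries.X : PS) ^ (a * i) ∣ f ^ i := by
    rw [pow_mul]; exact pow_dvd_pow_of_dvd hf i
  have h2 : (PowerSeries.X : PS) ^ (b * j) ∣ g ^ j := by
    rw [pow_mul]; exact pow_dvd_pow_of_dvd hg j
  have h3 : (PowerSeries.X : PS) ^ (a * i + b * j) ∣ f ^ i * g ^ j := by
    rw [pow_add]; exact mul_dvd_mul h1 h2
  exact PowerSeries.X_pow_dvd_iff.mp h3 m hm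

lemma coeff_mul_orders {f g : PS} {a b : ℕ}
    (hf : (PowerSeries.X : PS) ^ a ∣ f) (hg : (PowerSeries.X : PS) ^ b ∣ g) :
    PowerSeries.coeff (a + b) (f * g) =
      PowerSeries.coeff a f * PowerSeries.coeff b g := by
  obtain ⟨f1, rfl⟩ := hf
  obtain ⟨g1, rfl⟩ := hg
  have h : (PowerSeries.X : PS) ^ a * f1 * ((PowerSeries.X : PS) ^ b * g1)
      = (PowerSeries.X : PS) ^ (a + b) * (f1 * g1) := by ring
  have c1 := PowerSeries.coeff_X_pow_mul (f1 * g1) (a + b) 0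
  have c2 := PowerSeries.coeff_X_pow_mul f1 a 0
  have c3 := PowerSeries.coeff_X_pow_mul g1 b 0
  rw [zero_add] at c1 c2 c3
  rw [h, c1, c2, c3]
  simp [PowerSeries.coeff_zero_eq_constantCoeff, map_mul]

end Stmt17Aux

namespace Stmt17Aux

open MvPolynomial

/-- Formula A: weights (4,4), coefficient 4. -/
lemma formulaA {f g : PS}
    (hf : (PowerSeries.X : PS) ^ 4 ∣ f) (hg : (PowerSeries.X : PS) ^ 4 ∣ g)
    (p : MvPolynomial (Fin 2) ℂ) :
    PowerSeries.coeff 4 (aeval ![f, g] p) =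
      p.coeff (mk2 1 0) * PowerSeries.coeff 4 f
      + p.coeff (mk2 0 1) * PowerSeries.coeff 4 g := by
  classical
  rw [sum_restrict ![f, g] 4 {mk2 1 0, mk2 0 1} ?hv p]
  · rw [Finset.sum_insert (by simp [mk2_injEq]), Finset.sum_singleton]
    simp
  case hv =>
    intro d hd
    simp only [Finset.mem_insert, Finset.mem_singleton] at hd
    push_neg at hd
    rw [eq_mk2 d] at hd
    by_cases h0 : d 0 = 0 ∧ d 1 = 0
    · rw [h0.1, h0.2]
      simp [PowerSeries.coeff_one]
    · refine coeff_pow_mul_eq_zero hf hg ?_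
      have h1 : ¬(d 0 = 1 ∧ d 1 = 0) := fun hc => hd.1 (by rw [hc.1, hc.2])
      have h2 : ¬(d 0 = 0 ∧ d 1 = 1) := fun hc => hd.2 (by rw [hc.1, hc.2])
      omega

/-- Formula B: weights (4,6), any coefficient 1 ≤ m ≤ 11. -/
lemma formulaB {f g : PS}
    (hf : (PowerSeries.X : PS) ^ 4 ∣ f) (hg : (PowerSeries.X : PS) ^ 6 ∣ g)
    (p : MvPolynomial (Fin 2) ℂ) {m : ℕ} (hm1 : 1 ≤ m) (hm : m ≤ 11) :
    PowerSeries.coeff m (aeval ![f, g] p) =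
      p.coeff (mk2 1 0) * PowerSeries.coeff m f
      + p.coeff (mk2 0 1) * PowerSeries.coeff m g
      + p.coeff (mk2 2 0) * PowerSeries.coeff m (f * f)
      + p.coeff (mk2 1 1) * PowerSeries.coeff m (f * g) := by
  classical
  rw [sum_restrict ![f, g] m {mk2 1 0, mk2 0 1, mk2 2 0, mk2 1 1} ?hv p]
  · rw [Finset.sum_insert (by simp [mk2_injEq]), Finset.sum_insert (by simp [mk2_injEq]),
      Finset.sum_insert (by simp [mk2_injEq]), Finset.sum_singleton]
    simp [pow_two]
    ring
  case hv =>
    intro d hd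
    simp only [Finset.mem_insert, Finset.mem_singleton] at hd
    push_neg at hd
    rw [eq_mk2 d] at hd
    by_cases h0 : d 0 = 0 ∧ d 1 = 0
    · rw [h0.1, h0.2]
      have : m ≠ 0 := by omega
      simp [PowerSeries.coeff_one, this]
    · refine coeff_pow_mul_eq_zero hf hg ?_
      obtain ⟨hd1, hd2, hd3, hd4⟩ := hd
      have h1 : ¬(d 0 = 1 ∧ d 1 = 0) := fun hc => hd1 (by rw [hc.1, hc.2])
      have h2 : ¬(d 0 = 0 ∧ d 1 = 1) := fun hc => hd2 (by rw [hc.1, hc.2])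
      have h3 : ¬(d 0 = 2 ∧ d 1 = 0) := fun hc => hd3 (by rw [hc.1, hc.2])
      have h4 : ¬(d 0 = 1 ∧ d 1 = 1) := fun hc => hd4 (by rw [hc.1, hc.2])
      omega

/-- Γ = ⟨4,6,11⟩ is contained in {0} ∪ {n ≥ 4, n ≠ 5}. -/
lemma gamma_bound {n : ℕ} (h : n ∈ AddSubmonoid.closure ({4, 6, 11} : Set ℕ)) :
    n = 0 ∨ (4 ≤ n ∧ n ≠ 5) := by
  have hle : AddSubmonoid.closure ({4, 6, 11} : Set ℕ) ≤
      { carrier := {n | n = 0 ∨ (4 ≤ n ∧ n ≠ 5)}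
        zero_mem' := Or.inl rfl
        add_mem' := by
          intro a b ha hb
          simp only [Set.mem_setOf_eq] at *
          omega } := by
    rw [AddSubmonoid.closure_le]
    intro x hx
    simp only [Set.mem_insert_iff, Set.mem_singleton_iff] at hx
    rcases hx with rfl | rfl | rfl <;> simp
  exact hle h

lemma four_mem : (4 : ℕ) ∈ AddSubmonoid.closure ({4, 6, 11} : Set ℕ) :=
  AddSubmonoid.subset_closure (by simp)

lemma six_mem : (6 : ℕ) ∈ AddSubmonoid.closure ({4, 6, 11} : Set ℕ) :=
  AddSubmonoid.subset_closure (by simp)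

lemma eleven_mem : (11 : ℕ) ∈ AddSubmonoid.closure ({4, 6, 11} : Set ℕ) :=
  AddSubmonoid.subset_closure (by simp)

lemma exists_hasOrder {f : PS} {n : ℕ} (h : PowerSeries.coeff n f ≠ 0) :
    ∃ m, m ≤ n ∧ HasOrder f m := by
  classical
  have hex : ∃ m, PowerSeries.coeff m f ≠ 0 := ⟨n, h⟩
  exact ⟨Nat.find hex, Nat.find_le h, Nat.find_spec hex,
    fun m hm => not_not.mp (Nat.find_min hex hm)⟩

/-- If the semigroup of `S` is `Γ` and `f ∈ S` has zero constant term,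
then its coefficients below 4 vanish. -/
lemma low_coeffs {S : Set PS}
    (hS : sgp S = (AddSubmonoid.closure ({4, 6, 11} : Set ℕ) : Set ℕ))
    {f : PS} (hf : f ∈ S) (h0 : PowerSeries.coeff 0 f = 0) :
    ∀ m < 4, PowerSeries.coeff m f = 0 := by
  intro m hm
  by_contra hc
  obtain ⟨k, hk, hko⟩ := exists_hasOrder hc
  have hkS : k ∈ sgp S := ⟨f, hf, hko⟩
  rw [hS] at hkS
  have := gamma_bound hkS
  have hk0 : k ≠ 0 := by
    intro h
    rw [h] at hko
    exact hko.1 h0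
  omega

lemma adjSet_subset {x y : Fin 2 → PS} {c : ℕ}
    (σ : Fin 2 → MvPolynomial (Fin 2) ℂ)
    (hxy : ∀ i, aeval y (σ i) = x i) :
    adjSet x c ⊆ adjSet y c := by
  rintro F ⟨p, h, rfl⟩
  refine ⟨bind₁ σ p, h, ?_⟩
  rw [aeval_bind₁]
  congr 1
  exact congrArg (fun z => aeval z p) (funext hxy) |>.symm

end Stmt17Aux

namespace Stmt17Aux

open MvPolynomial

lemma central (f g : PS)
    (hS : sgp (adjSet ![f, g] 14) = (AddSubmonoid.closure ({4, 6, 11} : Set ℕ) : Set ℕ))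
    (h0f : PowerSeries.coeff 0 f = 0)
    (h0g : PowerSeries.coeff 0 g = 0)
    (h4 : PowerSeries.coeff 4 f ≠ 0) : False := by
  classical
  have hfS : f ∈ adjSet ![f, g] 14 := ⟨X 0, 0, by simp⟩
  have hgS : g ∈ adjSet ![f, g] 14 := ⟨X 1, 0, by simp⟩
  have hlf := low_coeffs hS hfS h0f
  have hlg := low_coeffs hS hgS h0g
  have hXf : (PowerSeries.X : PS) ^ 4 ∣ f := PowerSeries.X_pow_dvd_iff.mpr hlf
  set lam := PowerSeries.coeff 4 g / PowerSeries.coeff 4 f with hlam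
  set G := g - lam • f with hGdef
  have hGS : G ∈ adjSet ![f, g] 14 :=
    ⟨X 1 - lam • X 0, 0, by simp [hGdef, map_sub, map_smul]⟩
  have h0G : PowerSeries.coeff 0 G = 0 := by
    simp [hGdef, map_sub, map_smul, h0f, h0g]
  have hlG := low_coeffs hS hGS h0G
  have hG4 : PowerSeries.coeff 4 G = 0 := by
    rw [hGdef, map_sub, map_smul, smul_eq_mul, hlam, div_mul_cancel₀ _ h4, sub_self]
  have hG5 : PowerSeries.coeff 5 G = 0 := by
    by_contra hc
    have hord : HasOrder G 5 := by
      refine ⟨hc, fun m hm => ?_⟩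
      interval_cases m
      · exact hlG 0 (by norm_num)
      · exact hlG 1 (by norm_num)
      · exact hlG 2 (by norm_num)
      · exact hlG 3 (by norm_num)
      · exact hG4
    have h5 : (5 : ℕ) ∈ sgp (adjSet ![f, g] 14) := ⟨G, hGS, hord⟩
    rw [hS] at h5
    have := gamma_bound h5
    omega
  have hXG : (PowerSeries.X : PS) ^ 6 ∣ G := by
    refine PowerSeries.X_pow_dvd_iff.mpr fun m hm => ?_
    interval_cases m
    · exact hlG 0 (by norm_num)
    · exact hlG 1 (by norm_num)
    · exact hlG 2 (by norm_num)
    · exact hlG 3 (by norm_num)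
    · exact hG4
    · exact hG5
  have hXff : (PowerSeries.X : PS) ^ 8 ∣ f * f := by
    have := mul_dvd_mul hXf hXf; rwa [← pow_add] at this
  have hXfG : (PowerSeries.X : PS) ^ 10 ∣ f * G := by
    have := mul_dvd_mul hXf hXG; rwa [← pow_add] at this
  have cG := PowerSeries.X_pow_dvd_iff.mp hXG
  have cff := PowerSeries.X_pow_dvd_iff.mp hXff
  have cfG := PowerSeries.X_pow_dvd_iff.mp hXfG
  have hsub : adjSet ![f, g] 14 ⊆ adjSet ![f, G] 14 := by
    refine adjSet_subset ![X 0, X 1 + lam • X 0] fun i => ?_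
    fin_cases i
    · simp
    · simp [hGdef, map_add, map_smul]
  have getord : ∀ n : ℕ, n ∈ AddSubmonoid.closure ({4, 6, 11} : Set ℕ) →
      ∃ p : MvPolynomial (Fin 2) ℂ, ∃ r : PS,
        HasOrder (aeval ![f, G] p + (PowerSeries.X : PS) ^ 14 * r) n := by
    intro n hn
    have hn' : n ∈ sgp (adjSet ![f, g] 14) := by rw [hS]; exact hn
    obtain ⟨h, hmem, hord⟩ := hn'
    obtain ⟨p, r, rfl⟩ := hsub hmem
    exact ⟨p, r, hord⟩
  have coeff_comb : ∀ (p : MvPolynomial (Fin 2) ℂ) (r : PS) (m : ℕ), m < 14 →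
      PowerSeries.coeff m (aeval ![f, G] p + (PowerSeries.X : PS) ^ 14 * r)
        = PowerSeries.coeff m (aeval ![f, G] p) := by
    intro p r m hm
    rw [map_add, PowerSeries.X_pow_dvd_iff.mp (dvd_mul_right _ _) m hm, add_zero]
  -- Stage B : coeff 6 G ≠ 0
  have hG6 : PowerSeries.coeff 6 G ≠ 0 := by
    obtain ⟨p, r, hord⟩ := getord 6 six_mem
    have e4 : PowerSeries.coeff 4 (aeval ![f, G] p) = 0 := by
      rw [← coeff_comb p r 4 (by norm_num)]
      exact hord.2 4 (by norm_num)
    rw [formulaB hXf hXG p (by norm_num) (by norm_num), cG 4 (by norm_num),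
      cff 4 (by norm_num), cfG 4 (by norm_num)] at e4
    simp only [mul_zero, add_zero] at e4
    have hα : p.coeff (mk2 1 0) = 0 := by
      rcases mul_eq_zero.mp e4 with h | h
      · exact h
      · exact absurd h h4
    have e6 : PowerSeries.coeff 6 (aeval ![f, G] p) ≠ 0 := by
      rw [← coeff_comb p r 6 (by norm_num)]
      exact hord.1
    rw [formulaB hXf hXG p (by norm_num) (by norm_num), hα, cff 6 (by norm_num),
      cfG 6 (by norm_num)] at e6
    simp only [zero_mul, mul_zero, zero_add, add_zero] at e6
    exact fun hc => e6 (by rw [hc, mul_zero])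
  -- Stage C : an element of order 11 gives a contradiction
  obtain ⟨p, r, hord⟩ := getord 11 eleven_mem
  have coeffz : ∀ m : ℕ, m < 11 → PowerSeries.coeff m (aeval ![f, G] p) = 0 := by
    intro m hm
    rw [← coeff_comb p r m (by omega)]
    exact hord.2 m hm
  have e4 := coeffz 4 (by norm_num)
  rw [formulaB hXf hXG p (by norm_num) (by norm_num), cG 4 (by norm_num),
    cff 4 (by norm_num), cfG 4 (by norm_num)] at e4
  simp only [mul_zero, add_zero] at e4
  have hα : p.coeff (mk2 1 0) = 0 := by
    rcases mul_eq_zero.mp e4 with h | h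
    · exact h
    · exact absurd h h4
  have e6 := coeffz 6 (by norm_num)
  rw [formulaB hXf hXG p (by norm_num) (by norm_num), hα, cff 6 (by norm_num),
    cfG 6 (by norm_num)] at e6
  simp only [zero_mul, mul_zero, zero_add, add_zero] at e6
  have hβ : p.coeff (mk2 0 1) = 0 := by
    rcases mul_eq_zero.mp e6 with h | h
    · exact h
    · exact absurd h hG6
  have hcff8 : PowerSeries.coeff 8 (f * f)
      = PowerSeries.coeff 4 f * PowerSeries.coeff 4 f := by
    have := coeff_mul_orders hXf hXf
    norm_num at this
    exact this
  have e8 := coeffz 8 (by norm_num)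
  rw [formulaB hXf hXG p (by norm_num) (by norm_num), hα, hβ, cfG 8 (by norm_num),
    hcff8] at e8
  simp only [zero_mul, mul_zero, zero_add, add_zero] at e8
  have hγ : p.coeff (mk2 2 0) = 0 := by
    rcases mul_eq_zero.mp e8 with h | h
    · exact h
    · rcases mul_eq_zero.mp h with h' | h' <;> exact absurd h' h4
  have hcfG10 : PowerSeries.coeff 10 (f * G)
      = PowerSeries.coeff 4 f * PowerSeries.coeff 6 G := by
    have := coeff_mul_orders hXf hXG
    norm_num at this
    exact this
  have e10 := coeffz 10 (by norm_num)
  rw [formulaB hXf hXG p (by norm_num) (by norm_num), hα, hβ, hγ, hcfG10] at e10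
  simp only [zero_mul, mul_zero, zero_add, add_zero] at e10
  have hδ : p.coeff (mk2 1 1) = 0 := by
    rcases mul_eq_zero.mp e10 with h | h
    · exact h
    · rcases mul_eq_zero.mp h with h' | h'
      · exact absurd h' h4
      · exact absurd h' hG6
  have e11 : PowerSeries.coeff 11 (aeval ![f, G] p) ≠ 0 := by
    rw [← coeff_comb p r 11 (by norm_num)]
    exact hord.1
  rw [formulaB hXf hXG p (by norm_num) (by norm_num), hα, hβ, hγ, hδ] at e11
  simp at e11

end Stmt17Aux


/-- for `Γ = ⟨4,6,11⟩` (conductor 14), no subalgebra of the form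
`⟨f,g⟩ + t¹⁴·ℂ[[t]]` has semigroup `Γ`: the semigroup is not that of a plane curve
singularity. -/
theorem stmt17 :
    ¬∃ f g : PowerSeries ℂ,
      sgp (adjSet ![f, g] 14) =
        (AddSubmonoid.closure ({4, 6, 11} : Set ℕ) : Set ℕ) := by
  classical
  rintro ⟨f, g, hS⟩
  open MvPolynomial Stmt17Aux in
  · set a := PowerSeries.coeff 0 f with ha
    set b := PowerSeries.coeff 0 g with hb
    set f' := f - a • (1 : PS) with hf'
    set g' := g - b • (1 : PS) with hg'
    have hEq : adjSet ![f', g'] 14 = adjSet ![f, g] 14 := by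
      apply Set.Subset.antisymm
      · refine adjSet_subset ![X 0 - a • 1, X 1 - b • 1] fun i => ?_
        fin_cases i <;> simp [hf', hg', map_sub, map_smul]
      · refine adjSet_subset ![X 0 + a • 1, X 1 + b • 1] fun i => ?_
        fin_cases i <;> simp [hf', hg', map_add, map_smul]
    have hS' : sgp (adjSet ![f', g'] 14)
        = (AddSubmonoid.closure ({4, 6, 11} : Set ℕ) : Set ℕ) := by
      rw [hEq]; exact hS
    have h0f' : PowerSeries.coeff 0 f' = 0 := by
      simp [hf', map_sub, map_smul, ← ha]
    have h0g' : PowerSeries.coeff 0 g' = 0 := by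
      simp [hg', map_sub, map_smul, ← hb]
    have hf'S : f' ∈ adjSet ![f', g'] 14 := ⟨X 0, 0, by simp⟩
    have hg'S : g' ∈ adjSet ![f', g'] 14 := ⟨X 1, 0, by simp⟩
    have hXf' : (PowerSeries.X : PS) ^ 4 ∣ f' :=
      PowerSeries.X_pow_dvd_iff.mpr (low_coeffs hS' hf'S h0f')
    have hXg' : (PowerSeries.X : PS) ^ 4 ∣ g' :=
      PowerSeries.X_pow_dvd_iff.mpr (low_coeffs hS' hg'S h0g')
    have h4' : (4 : ℕ) ∈ sgp (adjSet ![f', g'] 14) := by rw [hS']; exact four_mem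
    obtain ⟨h, hmem, hord⟩ := h4'
    obtain ⟨p, r, rfl⟩ := hmem
    have hne := hord.1
    rw [map_add, PowerSeries.X_pow_dvd_iff.mp (dvd_mul_right _ _) 4 (by norm_num),
      add_zero, formulaA hXf' hXg' p] at hne
    by_cases hf4 : PowerSeries.coeff 4 f' = 0
    · have hg4 : PowerSeries.coeff 4 g' ≠ 0 := by
        intro hc
        rw [hf4, hc] at hne
        simp at hne
      have hEq2 : adjSet ![g', f'] 14 = adjSet ![f', g'] 14 := by
        apply Set.Subset.antisymm
        · refine adjSet_subset ![X 1, X 0] fun i => ?_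
          fin_cases i <;> simp
        · refine adjSet_subset ![X 1, X 0] fun i => ?_
          fin_cases i <;> simp
      exact central g' f' (by rw [hEq2]; exact hS') h0g' h0f' hg4
    · exact central f' g' hS' h0f' h0g' hf4
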